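/- arXiv:1401.3708 — 5 statements merged into one kernel-verified Lean document; each statement's English description precedes it below -/
import Mathlib

section
/- Let d and c be integers ≥ 1 such that either (i) d ∈ {1,2,3,4} and c = 1, or (ii) d ≥ 5, c < d/2, and gcd(d,c) = 1. Then the Farey sequence 𝔉_d contains a pair of rationals p/d and q/c (in lowest terms) such that q/c = comp(p/d). -/
/-- `y` is in the `GL(n,ℤ) ⋉ ℤⁿ`-orbit of `x`, i.e. `y = U x + t` for an integer
matrix `U` with `det U = ±1` and an integer vector `t`. -/
def SameOrbit (n : ℕ) (x y : Fin n → ℝ) : Prop :=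
  ∃ (U : Matrix (Fin n) (Fin n) ℤ) (t : Fin n → ℤ),
    (U.det = 1 ∨ U.det = -1) ∧
    ∀ i, y i = (∑ j, (U i j : ℝ) * x j) + (t i : ℝ)

/-- The subgroup `G_x = ℤ + ℤx₁ + ⋯ + ℤxₙ` of the additive reals. -/
def Gx {n : ℕ} (x : Fin n → ℝ) : AddSubgroup ℝ :=
  AddSubgroup.closure (insert (1 : ℝ) (Set.range x))

/-- A point of `ℝⁿ` is rational if all its coordinates are rational. -/
def IsRationalPoint {n : ℕ} (y : Fin n → ℝ) : Prop :=
  ∀ i, ∃ q : ℚ, y i = (q : ℝ)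

/-- The denominator of a rational point: the least positive integer `d`
with `d • y ∈ ℤⁿ`. -/
noncomputable def den {n : ℕ} (y : Fin n → ℝ) : ℕ :=
  sInf {d : ℕ | 0 < d ∧ ∀ i, ∃ m : ℤ, (d : ℝ) * y i = (m : ℝ)}

/-- The homogeneous correspondent `ỹ = den(y)·(y,1)`, viewed as a real vector. -/
noncomputable def tildeR {n : ℕ} (y : Fin n → ℝ) : Fin (n + 1) → ℝ :=
  fun i => (den y : ℝ) * (Fin.snoc y (1 : ℝ) : Fin (n + 1) → ℝ) i

/-- A rational `m`-simplex `conv(v₀,…,v_m) ⊆ ℝⁿ` is regular if the homogeneous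
correspondents `ṽ₀,…,ṽ_m ∈ ℤ^{n+1}` can be extended to a ℤ-basis of `ℤ^{n+1}`. -/
def IsRegularSimplex {n m : ℕ} (v : Fin (m + 1) → (Fin n → ℝ)) : Prop :=
  AffineIndependent ℝ v ∧ (∀ k, IsRationalPoint (v k)) ∧
  ∃ (b : Module.Basis (Fin (n + 1)) ℤ (Fin (n + 1) → ℤ)) (f : Fin (m + 1) ↪ Fin (n + 1)),
    ∀ k i, ((b (f k)) i : ℝ) = tildeR (v k) i

/-- A rational hyperplane in `ℝⁿ`. -/
def IsRatHyperplane {n : ℕ} (H : Set (Fin n → ℝ)) : Prop :=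
  ∃ (h : Fin n → ℚ) (k : ℚ), h ≠ 0 ∧ H = {z | (∑ i, (h i : ℝ) * z i) = (k : ℝ)}

/-- A rational affine space: an intersection of rational hyperplanes. -/
def IsRatAffineSpace {n : ℕ} (F : Set (Fin n → ℝ)) : Prop :=
  ∃ S : Set (Set (Fin n → ℝ)), (∀ H ∈ S, IsRatHyperplane H) ∧ F = ⋂₀ S

/-- `F_x`: the intersection of all rational hyperplanes containing `x`
(`= ℝⁿ` if there is no such hyperplane). -/
def Fx {n : ℕ} (x : Fin n → ℝ) : Set (Fin n → ℝ) :=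
  ⋂₀ {H | IsRatHyperplane H ∧ x ∈ H}

/-- The (affine) dimension of a subset of `ℝⁿ`. -/
noncomputable def affDim {n : ℕ} (F : Set (Fin n → ℝ)) : ℕ :=
  Module.finrank ℝ ↥(vectorSpan ℝ F)

/-- `d_F`: the least denominator of a rational point of `F`. -/
noncomputable def dF {n : ℕ} (F : Set (Fin n → ℝ)) : ℕ :=
  sInf {d : ℕ | ∃ y ∈ F, IsRationalPoint y ∧ den y = d}

/-- `c_F`: the smallest possible denominator of a vertex of a regular `n`-simplex
`conv(v₀,…,v_n) ⊆ ℝⁿ` with `v₀,…,v_e ∈ F`. -/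
noncomputable def cF {n : ℕ} (e : ℕ) (F : Set (Fin n → ℝ)) : ℕ :=
  sInf {c : ℕ | ∃ (v : Fin (n + 1) → (Fin n → ℝ)) (i : Fin (n + 1)),
    IsRegularSimplex v ∧ (∀ k : Fin (n + 1), (k : ℕ) ≤ e → v k ∈ F) ∧ den (v i) = c}

/-- `c_x = c_{F_x}`. -/
noncomputable def cx {n : ℕ} (x : Fin n → ℝ) : ℕ := cF (affDim (Fx x)) (Fx x)

/-- Membership in the Farey sequence `𝔉_d`. -/
def InFarey (d : ℕ) (x : ℚ) : Prop := 0 ≤ x ∧ x ≤ 1 ∧ x.den ≤ d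

/-- `x` and `y` are neighbors (contiguous elements) of the Farey sequence `𝔉_d`. -/
def FareyNeighbor (d : ℕ) (x y : ℚ) : Prop :=
  InFarey d x ∧ InFarey d y ∧ x ≠ y ∧
  ∀ t : ℚ, InFarey d t → ¬ (min x y < t ∧ t < max x y)

/-- `y` is the companion of `x`: `comp 0 = 1`, `comp 1 = 0`, `comp (1/2) = 1`, and
for denominator `d ≥ 3`, `comp x` is the neighbor of `x` in `𝔉_d` with smaller
denominator than the other neighbor. -/
def IsCompanion (x y : ℚ) : Prop :=
  (x = 0 ∧ y = 1) ∨ (x = 1 ∧ y = 0) ∨ (x = 1/2 ∧ y = 1) ∨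
  (3 ≤ x.den ∧ FareyNeighbor x.den x y ∧
    ∀ z : ℚ, FareyNeighbor x.den x z → z ≠ y → y.den < z.den)

lemma coprime_of_rel {a : ℤ} {b : ℕ} (u v : ℤ) (h : u * a + v * b = 1) :
    a.natAbs.Coprime b := by
  have hco : IsCoprime a (b : ℤ) := ⟨u, v, h⟩
  have := Int.isCoprime_iff_gcd_eq_one.mp hco
  simpa [Int.gcd] using this

lemma between_den {x y : ℚ} (t : ℚ) (h1 : x < t) (h2 : t < y)
    (hxy : y.num * x.den - x.num * y.den = 1) : x.den + y.den ≤ t.den := by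
  have hA : (1:ℤ) ≤ t.num * x.den - x.num * t.den := by
    have := (Rat.lt_iff _ _).mp h1; omega
  have hB : (1:ℤ) ≤ y.num * t.den - t.num * y.den := by
    have := (Rat.lt_iff _ _).mp h2; omega
  have key : (t.den:ℤ) = (x.den:ℤ) * (y.num * t.den - t.num * y.den)
      + (y.den:ℤ) * (t.num * x.den - x.num * t.den) := by
    linear_combination (-(t.den:ℤ)) * hxy
  have hx : (1:ℤ) ≤ x.den := by exact_mod_cast x.pos
  have hy : (1:ℤ) ≤ y.den := by exact_mod_cast y.pos
  have : (x.den:ℤ) + y.den ≤ t.den := by nlinarith [hA, hB, key, hx, hy]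
  exact_mod_cast this

lemma farey_main (d c : ℕ) (hd : 3 ≤ d) (hc : 1 ≤ c) (hcd : 2 * c < d)
    (hg : Nat.gcd d c = 1) :
    ∃ x y : ℚ, x ∈ Set.Icc (0 : ℚ) 1 ∧ y ∈ Set.Icc (0 : ℚ) 1 ∧
      x.den = d ∧ y.den = c ∧ IsCompanion x y := by
  have hd0 : (0:ℤ) < d := by exact_mod_cast Nat.lt_of_lt_of_le (by norm_num) hd
  have hc0 : (0:ℤ) < c := by exact_mod_cast hc
  have hcd' : (2:ℤ) * c < d := by exact_mod_cast hcd
  have hco : IsCoprime (d:ℤ) (c:ℤ) := by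
    rw [Int.isCoprime_iff_gcd_eq_one]
    simpa [Int.gcd] using hg
  obtain ⟨u, v, huv⟩ := hco
  set P : ℤ := (-v) % d with hPdef
  have hP0 : 0 ≤ P := Int.emod_nonneg _ (by omega)
  have hPd : P < d := Int.emod_lt_of_pos _ hd0
  have hdvdPv : (d:ℤ) ∣ P + v := by
    have h1 : P % d = (-v) % d := Int.emod_emod_of_dvd _ dvd_rfl
    have h2 : (d:ℤ) ∣ (-v) - P := Int.ModEq.dvd h1
    have : P + v = -((-v) - P) := by ring
    rw [this]; exact dvd_neg.mpr h2
  have hqd : (d:ℤ) ∣ P * c + 1 := by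
    have heq : P * c + 1 = (P + v) * c + u * d := by linear_combination -huv
    rw [heq]; exact dvd_add (hdvdPv.mul_right c) (Dvd.intro_left u rfl)
  set q : ℤ := (P * c + 1) / d with hqdef
  have hq : q * d = P * c + 1 := Int.ediv_mul_cancel hqd
  have hP1 : 1 ≤ P := by
    rcases hP0.lt_or_eq with h | h
    · omega
    · exfalso
      have h1 : q * d = 1 := by rw [hq, ← h]; ring
      have : (d:ℤ) ≤ 1 := Int.le_of_dvd one_pos ⟨q, by linarith⟩
      omega
  have hq1 : 1 ≤ q := by nlinarith
  have hqc : q ≤ c := by nlinarith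
  set A : ℤ := P - q with hAdef
  set B : ℕ := d - c with hBdef
  have hBc : (B:ℤ) = (d:ℤ) - c := by
    have : c ≤ d := by omega
    push_cast [hBdef, this]; ring
  have hBge : (c:ℤ) + 1 ≤ B := by omega
  have hab : P * B - A * d = 1 := by rw [hBc, hAdef]; linear_combination hq
  have hA1 : 1 ≤ A := by nlinarith
  have hAB : A < B := by nlinarith
  have hcopP : P.natAbs.Coprime d := coprime_of_rel (-(c:ℤ)) q (by linarith)
  have hcopq : q.natAbs.Coprime c := coprime_of_rel (d:ℤ) (-P) (by linarith)
  have hcopA : A.natAbs.Coprime B := coprime_of_rel (-(d:ℤ)) P (by linarith)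
  set x : ℚ := ⟨P, d, by omega, hcopP⟩ with hxdef
  set y : ℚ := ⟨q, c, by omega, hcopq⟩ with hydef
  set w : ℚ := ⟨A, B, by omega, hcopA⟩ with hwdef
  have hxy : x < y := (Rat.lt_iff _ _).mpr (show P * (c:ℤ) < q * (d:ℤ) by linarith)
  have hwx : w < x := (Rat.lt_iff _ _).mpr (show A * (d:ℤ) < P * (B:ℤ) by linarith)
  have hx0 : (0:ℚ) ≤ x := Rat.num_nonneg.mp (show (0:ℤ) ≤ P from hP0)
  have hx1 : x ≤ 1 := by
    rw [Rat.le_iff]; show P * ((1:ℚ).den : ℤ) ≤ (1:ℚ).num * (d:ℤ)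
    rw [Rat.num_one, Rat.den_one]; push_cast; linarith
  have hy0 : (0:ℚ) ≤ y := Rat.num_nonneg.mp (show (0:ℤ) ≤ q by linarith)
  have hy1 : y ≤ 1 := by
    rw [Rat.le_iff]; show q * ((1:ℚ).den : ℤ) ≤ (1:ℚ).num * (c:ℤ)
    rw [Rat.num_one, Rat.den_one]; push_cast; linarith
  have hw0 : (0:ℚ) ≤ w := Rat.num_nonneg.mp (show (0:ℤ) ≤ A by linarith)
  have hw1 : w ≤ 1 := by
    rw [Rat.le_iff]; show A * ((1:ℚ).den : ℤ) ≤ (1:ℚ).num * (B:ℤ)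
    rw [Rat.num_one, Rat.den_one]; push_cast; linarith
  have hFx : InFarey d x := ⟨hx0, hx1, le_refl d⟩
  have hFy : InFarey d y := ⟨hy0, hy1, show c ≤ d by omega⟩
  have hFw : InFarey d w := ⟨hw0, hw1, show B ≤ d by omega⟩
  have hnear_xy : ∀ t, InFarey d t → ¬ (x < t ∧ t < y) := by
    rintro t ht ⟨h1, h2⟩
    have h3 : x.den + y.den ≤ t.den :=
      between_den t h1 h2 (show q * (d:ℤ) - P * (c:ℤ) = 1 by linarith)
    have h4 : d + c ≤ t.den := h3
    have h5 : t.den ≤ d := ht.2.2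
    omega
  have hnear_wx : ∀ t, InFarey d t → ¬ (w < t ∧ t < x) := by
    rintro t ht ⟨h1, h2⟩
    have h3 : w.den + x.den ≤ t.den :=
      between_den t h1 h2 (show P * (B:ℤ) - A * (d:ℤ) = 1 from hab)
    have h4 : B + d ≤ t.den := h3
    have h5 : t.den ≤ d := ht.2.2
    omega
  have hnbr : FareyNeighbor d x y := by
    refine ⟨hFx, hFy, ne_of_lt hxy, ?_⟩
    intro t ht
    rw [min_eq_left hxy.le, max_eq_right hxy.le]
    exact hnear_xy t ht
  have huniq : ∀ z : ℚ, FareyNeighbor d x z → z ≠ y → y.den < z.den := by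
    rintro z ⟨_, hFz, hxz, hz4⟩ hzy
    rcases lt_trichotomy z x with h | h | h
    · rcases lt_trichotomy z w with h' | h' | h'
      · exfalso
        have := hz4 w hFw
        rw [min_eq_right h.le, max_eq_left h.le] at this
        exact this ⟨h', hwx⟩
      · have hz : z.den = B := by rw [h']
        show y.den < z.den
        rw [hz]; show c < B; omega
      · exfalso
        have h3 : w.den + x.den ≤ z.den :=
          between_den z h' h (show P * (B:ℤ) - A * (d:ℤ) = 1 from hab)
        have h4 : B + d ≤ z.den := h3
        have h5 : z.den ≤ d := hFz.2.2
        omega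
    · exact absurd h.symm hxz
    · rcases lt_trichotomy z y with h' | h' | h'
      · exact absurd ⟨h, h'⟩ (hnear_xy z hFz)
      · exact absurd h' hzy
      · exfalso
        have := hz4 y hFy
        rw [min_eq_left h.le, max_eq_right h.le] at this
        exact this ⟨hxy, h'⟩
  refine ⟨x, y, ⟨hx0, hx1⟩, ⟨hy0, hy1⟩, rfl, rfl, Or.inr (Or.inr (Or.inr ⟨?_, ?_, ?_⟩))⟩
  · show 3 ≤ d; exact hd
  · show FareyNeighbor d x y; exact hnbr
  · show ∀ z : ℚ, FareyNeighbor d x z → z ≠ y → y.den < z.den; exact huniq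


lemma farey_small_two :
    ∃ x y : ℚ, x ∈ Set.Icc (0 : ℚ) 1 ∧ y ∈ Set.Icc (0 : ℚ) 1 ∧
      x.den = 2 ∧ y.den = 1 ∧ IsCompanion x y := by
  refine ⟨1/2, 1, ⟨by norm_num, by norm_num⟩, ⟨by norm_num, le_refl 1⟩, ?_, Rat.den_one,
    Or.inr (Or.inr (Or.inl ⟨rfl, rfl⟩))⟩
  have h : ((⟨1, 2, by norm_num, by norm_num⟩ : ℚ)) = 1/2 := by
    rw [← Rat.num_div_den (⟨1, 2, by norm_num, by norm_num⟩ : ℚ)]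
    norm_num
  rw [← h]


/-- If `d, c ≥ 1` and either (`d ≤ 4` and `c = 1`) or (`d ≥ 5`,
`c < d/2`, `gcd(d,c) = 1`), then `𝔉_d` contains rationals `p/d` and `q/c` (in lowest
terms) with `q/c = comp(p/d)`. -/
theorem exists_companion_pair (d c : ℕ) (hd : 1 ≤ d) (hc : 1 ≤ c)
    (h : (d ≤ 4 ∧ c = 1) ∨ (5 ≤ d ∧ 2 * c < d ∧ Nat.gcd d c = 1)) :
    ∃ x y : ℚ, x ∈ Set.Icc (0 : ℚ) 1 ∧ y ∈ Set.Icc (0 : ℚ) 1 ∧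
      x.den = d ∧ y.den = c ∧ IsCompanion x y := by

  rcases h with ⟨h4, hc1⟩ | ⟨h5, hcd, hg⟩
  · subst hc1
    interval_cases d
    · exact ⟨0, 1, ⟨le_refl 0, by norm_num⟩, ⟨by norm_num, le_refl 1⟩,
        Rat.den_zero, Rat.den_one, Or.inl ⟨rfl, rfl⟩⟩
    · exact farey_small_two
    · exact farey_main 3 1 (by norm_num) (by norm_num) (by norm_num) (by norm_num)
    · exact farey_main 4 1 (by norm_num) (by norm_num) (by norm_num) (by norm_num)
  · exact farey_main d c (by omega) hc hcd hg
end

section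
/- For n ≥ 1, let F be a nonempty rational affine space in ℝⁿ and let d = d_F be the least denominator of a rational point of F. Then for every rational point y ∈ F there is an integer h ≥ 1 such that den(y) = h·d; i.e., d divides the denominator of every rational point of F. -/
lemma denSet_nonempty {n : ℕ} {y : Fin n → ℝ} (hyr : IsRationalPoint y) :
    {d : ℕ | 0 < d ∧ ∀ i, ∃ m : ℤ, (d : ℝ) * y i = (m : ℝ)}.Nonempty := by
  choose q hq using hyr
  refine ⟨∏ i, (q i).den, Finset.prod_pos fun i _ => (q i).pos, fun i => ?_⟩
  obtain ⟨c, hc⟩ := Finset.dvd_prod_of_mem (fun i => (q i).den) (Finset.mem_univ i)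
  refine ⟨(q i).num * c, ?_⟩
  have hden : ((q i).den : ℚ) ≠ 0 := by exact_mod_cast (q i).pos.ne'
  have h1 : ((q i).num : ℚ) = q i * (q i).den := (div_eq_iff hden).mp (Rat.num_div_den (q i))
  have key : ((∏ j, (q j).den : ℕ) : ℚ) * q i = (((q i).num * c : ℤ) : ℚ) := by
    rw [hc]
    push_cast
    rw [h1]
    ring
  rw [hq i]
  exact_mod_cast key

lemma den_spec {n : ℕ} {y : Fin n → ℝ} (hyr : IsRationalPoint y) :
    0 < den y ∧ ∀ i, ∃ m : ℤ, (den y : ℝ) * y i = (m : ℝ) :=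
  Nat.sInf_mem (denSet_nonempty hyr)

lemma den_dvd {n : ℕ} {y : Fin n → ℝ} (hyr : IsRationalPoint y) {N : ℕ}
    (hN : 0 < N) (h : ∀ i, ∃ m : ℤ, (N : ℝ) * y i = (m : ℝ)) : den y ∣ N := by
  obtain ⟨hd, hdy⟩ := den_spec hyr
  set d := den y with hdef
  have hr : ∀ i, ∃ m : ℤ, ((N % d : ℕ) : ℝ) * y i = (m : ℝ) := by
    intro i
    obtain ⟨m, hm⟩ := h i
    obtain ⟨l, hl⟩ := hdy i
    refine ⟨m - (N / d : ℕ) * l, ?_⟩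
    have hNd : (N : ℝ) = ((N % d : ℕ) : ℝ) + (d : ℝ) * ((N / d : ℕ) : ℝ) := by
      exact_mod_cast congrArg (Nat.cast : ℕ → ℝ) (Nat.mod_add_div N d).symm
    have hcast : ((m - ((N / d : ℕ) : ℤ) * l : ℤ) : ℝ)
        = (m : ℝ) - ((N / d : ℕ) : ℝ) * (l : ℝ) := by
      simp only [Int.cast_sub, Int.cast_mul, Int.cast_natCast]
    rw [hcast]
    linear_combination (-(y i)) * hNd + hm - ((N / d : ℕ) : ℝ) * hl
  by_contra hdvd
  have hmodpos : 0 < N % d := Nat.pos_of_ne_zero fun h0 => hdvd (Nat.dvd_of_mod_eq_zero h0)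
  have : d ≤ N % d := Nat.sInf_le ⟨hmodpos, hr⟩
  exact absurd (Nat.mod_lt N hd) (not_lt.mpr this)

/-- For a nonempty rational affine space `F ⊆ ℝⁿ` with least
denominator `d = d_F`, the denominator of every rational point of `F` is a positive
multiple of `d`. -/
theorem dF_dvd_den (n : ℕ) (hn : 1 ≤ n) (F : Set (Fin n → ℝ))
    (hF : IsRatAffineSpace F) (hFne : F.Nonempty)
    (y : Fin n → ℝ) (hy : y ∈ F) (hyr : IsRationalPoint y) :
    ∃ h : ℕ, 1 ≤ h ∧ den y = h * dF F := by
  obtain ⟨hb, hby⟩ := den_spec hyr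
  set b := den y with hbdef
  -- the defining set of dF F is nonempty
  have hne : {d : ℕ | ∃ x ∈ F, IsRationalPoint x ∧ den x = d}.Nonempty :=
    ⟨b, y, hy, hyr, rfl⟩
  obtain ⟨x, hxF, hxr, hxd⟩ : ∃ x ∈ F, IsRationalPoint x ∧ den x = dF F :=
    Nat.sInf_mem hne
  set d := dF F with hddef
  obtain ⟨hd, hdx'⟩ := den_spec hxr
  rw [hxd] at hd hdx'
  set g := Nat.gcd b d with hgdef
  have hg : 0 < g := Nat.gcd_pos_of_pos_left d hb
  have hgR : (g : ℝ) ≠ 0 := by positivity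
  set s := Int.gcdA (b : ℤ) (d : ℤ) with hsdef
  set t := Int.gcdB (b : ℤ) (d : ℤ) with htdef
  have hbez : (g : ℤ) = (b : ℤ) * s + (d : ℤ) * t := by
    have := Int.gcd_eq_gcd_ab (b : ℤ) (d : ℤ)
    rwa [Int.gcd_natCast_natCast] at this
  -- the point z = ((b*s)/g) • y + ((d*t)/g) • x
  set z : Fin n → ℝ :=
    fun i => (((b : ℤ) * s : ℤ) : ℝ) / g * y i + (((d : ℤ) * t : ℤ) : ℝ) / g * x i
    with hzdef
  have hcoef : (((b : ℤ) * s : ℤ) : ℝ) / g + (((d : ℤ) * t : ℤ) : ℝ) / g = 1 := by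
    rw [← add_div, div_eq_one_iff_eq hgR]
    exact_mod_cast hbez.symm
  -- z ∈ F
  obtain ⟨S, hS, hFS⟩ := hF
  have hzF : z ∈ F := by
    rw [hFS]
    intro H hH
    obtain ⟨h, k, -, rfl⟩ := hS H hH
    have hyH : (∑ i, (h i : ℝ) * y i) = (k : ℝ) := by
      have := hy; rw [hFS] at this; exact this _ hH
    have hxH : (∑ i, (h i : ℝ) * x i) = (k : ℝ) := by
      have := hxF; rw [hFS] at this; exact this _ hH
    show (∑ i, (h i : ℝ) * z i) = (k : ℝ)
    have : (∑ i, (h i : ℝ) * z i)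
        = (((b : ℤ) * s : ℤ) : ℝ) / g * (∑ i, (h i : ℝ) * y i)
          + (((d : ℤ) * t : ℤ) : ℝ) / g * (∑ i, (h i : ℝ) * x i) := by
      rw [Finset.mul_sum, Finset.mul_sum, ← Finset.sum_add_distrib]
      exact Finset.sum_congr rfl fun i _ => by simp [hzdef]; ring
    rw [this, hyH, hxH, ← add_mul, hcoef, one_mul]
  -- g • z has integer coordinates
  have hgz : ∀ i, ∃ m : ℤ, (g : ℝ) * z i = (m : ℝ) := by
    intro i
    obtain ⟨m, hm⟩ := hby i
    obtain ⟨l, hl⟩ := hdx' i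
    refine ⟨s * m + t * l, ?_⟩
    have : (g : ℝ) * z i = (s : ℝ) * ((b : ℝ) * y i) + (t : ℝ) * ((d : ℝ) * x i) := by
      rw [hzdef]
      field_simp
      push_cast
      ring
    rw [this, hm, hl]
    push_cast
    ring
  have hzr : IsRationalPoint z := by
    intro i
    obtain ⟨m, hm⟩ := hgz i
    refine ⟨(m : ℚ) / (g : ℚ), ?_⟩
    have : z i = (m : ℝ) / (g : ℝ) := by
      field_simp [← hm]
      linarith [hm]
    rw [this]; push_cast; ring
  -- den z ∣ g, hence den z ≤ g ≤ d ≤ den z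
  have h1 : den z ∣ g := den_dvd hzr hg hgz
  have h2 : den z ≤ g := Nat.le_of_dvd hg h1
  have h3 : d ≤ den z := Nat.sInf_le ⟨z, hzF, hzr, rfl⟩
  have h4 : g ≤ d := Nat.le_of_dvd hd (Nat.gcd_dvd_right b d)
  have hgd : g = d := le_antisymm h4 (le_trans h3 h2)
  have hdvd : d ∣ b := hgd ▸ Nat.gcd_dvd_left b d
  refine ⟨b / d, (Nat.one_le_div_iff hd).mpr (Nat.le_of_dvd hb hdvd), ?_⟩
  exact (Nat.div_mul_cancel hdvd).symm
end

section
/- Let a₁, a₂, a₃ be integers with gcd(a₁,a₂,a₃) = 1 and (a₁,a₂) ≠ (0,0), and let L = {(y₁,y₂) ∈ ℝ² : a₁y₁ + a₂y₂ + a₃ = 0}. Then d_L = gcd(a₁,a₂), i.e., the least denominator of a rational point lying on L equals gcd(a₁,a₂). -/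
/-- For integers `a₁, a₂, a₃` with `gcd(a₁,a₂,a₃) = 1` and
`(a₁,a₂) ≠ (0,0)`, the least denominator of a rational point on the line
`L = {(y₁,y₂) : a₁y₁ + a₂y₂ + a₃ = 0}` equals `gcd(a₁,a₂)`. -/
theorem dF_line_eq_gcd (a₁ a₂ a₃ : ℤ) (hgcd : Nat.gcd (Int.gcd a₁ a₂) a₃.natAbs = 1)
    (hne : ¬(a₁ = 0 ∧ a₂ = 0)) :
    dF {y : Fin 2 → ℝ | (a₁ : ℝ) * y 0 + (a₂ : ℝ) * y 1 + (a₃ : ℝ) = 0}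
      = Int.gcd a₁ a₂ := by
  set g : ℕ := Int.gcd a₁ a₂ with hgdef
  have hg0 : 0 < g := by
    rcases Nat.eq_zero_or_pos g with h | h
    · exact absurd (Int.gcd_eq_zero_iff.mp h) hne
    · exact h
  have hgR : (g : ℝ) ≠ 0 := by positivity
  have hcop : IsCoprime (g : ℤ) a₃ := by
    rw [Int.isCoprime_iff_gcd_eq_one]
    simpa [Int.gcd] using hgcd
  -- key lower bound
  have key : ∀ (d : ℕ), 0 < d → ∀ y : Fin 2 → ℝ,
      (a₁ : ℝ) * y 0 + (a₂ : ℝ) * y 1 + (a₃ : ℝ) = 0 →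
      (∀ i, ∃ m : ℤ, (d : ℝ) * y i = (m : ℝ)) → g ≤ d := by
    intro d hd y hy hint
    obtain ⟨m₀, hm₀⟩ := hint 0
    obtain ⟨m₁, hm₁⟩ := hint 1
    have hz : a₁ * m₀ + a₂ * m₁ + (d : ℤ) * a₃ = 0 := by
      have h : (a₁ : ℝ) * m₀ + (a₂ : ℝ) * m₁ + (d : ℝ) * a₃ = 0 := by
        rw [← hm₀, ← hm₁]; linear_combination (d : ℝ) * hy
      exact_mod_cast h
    have hdvd : (g : ℤ) ∣ (d : ℤ) * a₃ := by
      have h1 : (g : ℤ) ∣ a₁ := Int.gcd_dvd_left a₁ a₂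
      have h2 : (g : ℤ) ∣ a₂ := Int.gcd_dvd_right a₁ a₂
      have : (d : ℤ) * a₃ = -(a₁ * m₀ + a₂ * m₁) := by linarith
      rw [this]
      exact dvd_neg.mpr (dvd_add (h1.mul_right _) (h2.mul_right _))
    have hgd : (g : ℤ) ∣ (d : ℤ) := hcop.dvd_of_dvd_mul_right hdvd
    exact_mod_cast Int.le_of_dvd (by exact_mod_cast hd) hgd
  -- the witness point
  set A : ℤ := Int.gcdA a₁ a₂ with hA
  set B : ℤ := Int.gcdB a₁ a₂ with hB
  have hbez : (g : ℤ) = a₁ * A + a₂ * B := Int.gcd_eq_gcd_ab a₁ a₂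
  set y : Fin 2 → ℝ := ![((-(a₃ * A) : ℤ) : ℝ) / g, ((-(a₃ * B) : ℤ) : ℝ) / g] with hy
  have hy0 : y 0 = ((-(a₃ * A) : ℤ) : ℝ) / g := rfl
  have hy1 : y 1 = ((-(a₃ * B) : ℤ) : ℝ) / g := rfl
  have hzint : a₁ * (-(a₃ * A)) + a₂ * (-(a₃ * B)) + a₃ * g = 0 := by
    linear_combination a₃ * hbez
  have hmemL : (a₁ : ℝ) * y 0 + (a₂ : ℝ) * y 1 + (a₃ : ℝ) = 0 := by
    rw [hy0, hy1]
    have step : (a₁ : ℝ) * (((-(a₃ * A) : ℤ) : ℝ) / g) + (a₂ : ℝ) * (((-(a₃ * B) : ℤ) : ℝ) / g)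
        + (a₃ : ℝ) = ((a₁ * (-(a₃ * A)) + a₂ * (-(a₃ * B)) + a₃ * g : ℤ) : ℝ) / g := by
      push_cast
      field_simp
    rw [step, hzint]
    simp
  have hrat : IsRationalPoint y := by
    intro i
    fin_cases i
    · exact ⟨((-(a₃ * A) : ℤ) : ℚ) / g, by push_cast [hy0]; ring⟩
    · exact ⟨((-(a₃ * B) : ℤ) : ℚ) / g, by push_cast [hy1]; ring⟩
  have hgmem : g ∈ {d : ℕ | 0 < d ∧ ∀ i, ∃ m : ℤ, (d : ℝ) * y i = (m : ℝ)} := by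
    refine ⟨hg0, fun i => ?_⟩
    fin_cases i
    · refine ⟨-(a₃ * A), ?_⟩
      show (g : ℝ) * y 0 = _
      rw [hy0]; field_simp
    · refine ⟨-(a₃ * B), ?_⟩
      show (g : ℝ) * y 1 = _
      rw [hy1]; field_simp
  have hden : den y = g := by
    have h1 : den y ≤ g := Nat.sInf_le hgmem
    have h2 : g ≤ den y := by
      have hmem := Nat.sInf_mem (⟨g, hgmem⟩ :
        Set.Nonempty {d : ℕ | 0 < d ∧ ∀ i, ∃ m : ℤ, (d : ℝ) * y i = (m : ℝ)})
      exact key _ hmem.1 y hmemL hmem.2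
    omega
  -- conclude
  have hgT : g ∈ {d : ℕ | ∃ y ∈ {y : Fin 2 → ℝ |
      (a₁ : ℝ) * y 0 + (a₂ : ℝ) * y 1 + (a₃ : ℝ) = 0}, IsRationalPoint y ∧ den y = d} :=
    ⟨y, hmemL, hrat, hden⟩
  have hlb : ∀ d ∈ {d : ℕ | ∃ y ∈ {y : Fin 2 → ℝ |
      (a₁ : ℝ) * y 0 + (a₂ : ℝ) * y 1 + (a₃ : ℝ) = 0}, IsRationalPoint y ∧ den y = d},
      g ≤ d := by
    rintro d ⟨z, hzL, hzrat, rfl⟩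
    -- den z belongs to its defining set
    obtain ⟨q₀, hq₀⟩ := hzrat 0
    obtain ⟨q₁, hq₁⟩ := hzrat 1
    have hne0 : Set.Nonempty {e : ℕ | 0 < e ∧ ∀ i, ∃ m : ℤ, (e : ℝ) * z i = (m : ℝ)} := by
      refine ⟨q₀.den * q₁.den, Nat.mul_pos q₀.pos q₁.pos, fun i => ?_⟩
      fin_cases i
      · refine ⟨q₀.num * q₁.den, ?_⟩
        show ((q₀.den * q₁.den : ℕ) : ℝ) * z 0 = _
        have h0 : ((q₀.den : ℚ)) * q₀ = q₀.num := by
          rw [mul_comm]; exact_mod_cast Rat.mul_den_eq_num q₀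
        have h0R : ((q₀.den : ℝ)) * (q₀ : ℝ) = (q₀.num : ℝ) := by exact_mod_cast h0
        rw [hq₀]
        push_cast
        rw [mul_comm (q₀.den : ℝ) (q₁.den : ℝ), mul_assoc, h0R]
        ring
      · refine ⟨q₁.num * q₀.den, ?_⟩
        show ((q₀.den * q₁.den : ℕ) : ℝ) * z 1 = _
        have h1 : ((q₁.den : ℚ)) * q₁ = q₁.num := by
          rw [mul_comm]; exact_mod_cast Rat.mul_den_eq_num q₁
        have h1R : ((q₁.den : ℝ)) * (q₁ : ℝ) = (q₁.num : ℝ) := by exact_mod_cast h1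
        rw [hq₁]
        push_cast
        rw [mul_assoc, h1R]
        ring
    have hmem := Nat.sInf_mem hne0
    exact key _ hmem.1 z hzL hmem.2
  exact le_antisymm (Nat.sInf_le hgT) (hlb _ (Nat.sInf_mem ⟨g, hgT⟩))
end

section
/- Let x ∈ ℝ² with rank(G_x) = 2. Then F_x is a rational line, and d_{F_x} equals the denominator of the smallest positive nonzero rational in G_x; equivalently, G_x ∩ ℚ = ℤ·(1/d_{F_x}). -/
open Submodule

noncomputable def GxSub {n : ℕ} (x : Fin n → ℝ) : Submodule ℤ ℝ :=
  span ℤ (insert (1:ℝ) (Set.range x))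

lemma gx_eq_toAddSubgroup {n : ℕ} (x : Fin n → ℝ) :
    Gx x = (GxSub x).toAddSubgroup :=
  (Submodule.span_int_eq_addSubgroupClosure _).symm

lemma mem_gx_iff {n : ℕ} (x : Fin n → ℝ) {r : ℝ} : r ∈ Gx x ↔ r ∈ GxSub x := by
  rw [gx_eq_toAddSubgroup]; exact Submodule.mem_toAddSubgroup _

noncomputable def gxEquiv {n : ℕ} (x : Fin n → ℝ) : ↥(Gx x) ≃+ ↥(GxSub x) where
  toFun a := ⟨a.1, (mem_gx_iff x).mp a.2⟩
  invFun a := ⟨a.1, (mem_gx_iff x).mpr a.2⟩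
  left_inv a := rfl
  right_inv a := rfl
  map_add' a b := rfl

lemma finite_gx {n : ℕ} (x : Fin n → ℝ) : Module.Finite ℤ ↥(Gx x) := by
  have h1 : Module.Finite ℤ ↥(GxSub x) :=
    Module.Finite.iff_fg.mpr (Submodule.fg_span ((Set.finite_range x).insert 1))
  exact Module.Finite.equiv (gxEquiv x).toIntLinearEquiv.symm

lemma nosmul_gx {n : ℕ} (x : Fin n → ℝ) : NoZeroSMulDivisors ℤ ↥(Gx x) := by
  constructor
  intro c v h
  have h' : (c : ℝ) * (v : ℝ) = 0 := by
    have := congrArg (fun a : ↥(Gx x) => (a : ℝ)) h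
    simpa [zsmul_eq_mul] using this
  rcases mul_eq_zero.mp h' with hc | hv
  · exact Or.inl (by exact_mod_cast hc)
  · exact Or.inr (by ext; exact hv)

lemma one_mem_gx {n : ℕ} (x : Fin n → ℝ) : (1:ℝ) ∈ Gx x :=
  AddSubgroup.subset_closure (Set.mem_insert _ _)

lemma xi_mem_gx {n : ℕ} (x : Fin n → ℝ) (i : Fin n) : x i ∈ Gx x :=
  AddSubgroup.subset_closure (Set.mem_insert_of_mem _ (Set.mem_range_self i))

/-- If both coordinates are rational, rank can't be 2. -/
lemma not_both_rational (x : Fin 2 → ℝ) (hx : Module.finrank ℤ ↥(Gx x) = 2) :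
    ¬ ((∃ q : ℚ, x 0 = (q:ℝ)) ∧ (∃ q : ℚ, x 1 = (q:ℝ))) := by
  rintro ⟨⟨q0, h0⟩, ⟨q1, h1⟩⟩
  -- every element of Gx x is rational
  have hrat : ∀ r ∈ Gx x, ∃ q : ℚ, r = (q:ℝ) := by
    intro r hr
    induction hr using AddSubgroup.closure_induction with
    | mem y hy =>
      rcases hy with hy | ⟨i, rfl⟩
      · exact ⟨1, by simp [hy]⟩
      · fin_cases i
        · exact ⟨q0, h0⟩
        · exact ⟨q1, h1⟩
    | zero => exact ⟨0, by simp⟩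
    | add a b _ _ ha hb =>
      obtain ⟨qa, rfl⟩ := ha; obtain ⟨qb, rfl⟩ := hb
      exact ⟨qa + qb, by push_cast; ring⟩
    | neg a _ ha =>
      obtain ⟨qa, rfl⟩ := ha
      exact ⟨-qa, by push_cast; ring⟩
  haveI := finite_gx x
  haveI := nosmul_gx x
  haveI : Module.Free ℤ ↥(Gx x) := Module.free_of_finite_type_torsion_free'
  let b := (Module.finBasis ℤ ↥(Gx x)).reindex (finCongr hx)
  obtain ⟨r0, hr0⟩ := hrat _ (b 0).2
  obtain ⟨r1, hr1⟩ := hrat _ (b 1).2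
  have hb0 : ((b 0 : ↥(Gx x)) : ℝ) ≠ 0 := by
    intro h; exact b.ne_zero 0 (by ext; exact h)
  have hb1 : ((b 1 : ↥(Gx x)) : ℝ) ≠ 0 := by
    intro h; exact b.ne_zero 1 (by ext; exact h)
  have hr0' : r0 ≠ 0 := by rintro rfl; simp [hr0] at hb0
  have hr1' : r1 ≠ 0 := by rintro rfl; simp [hr1] at hb1
  have hli := b.linearIndependent
  rw [Fintype.linearIndependent_iff] at hli
  have key := hli ![r1.num * r0.den, -(r0.num * r1.den)] ?_ 0
  · have key' : r1.num * (r0.den:ℤ) = 0 := by simpa using key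
    rcases mul_eq_zero.mp key' with h | h
    · exact hr1' (Rat.num_eq_zero.mp h)
    · exact absurd h (by exact_mod_cast r0.pos.ne')
  · have : ((r1.num * r0.den : ℤ) • (b 0) + (-(r0.num * r1.den) : ℤ) • (b 1) : ↥(Gx x)) = 0 := by
      apply Subtype.val_injective
      push_cast [zsmul_eq_mul, hr0, hr1]
      have e0 : (r0.den : ℚ) * r0 = r0.num := by
        rw [mul_comm]; exact Rat.mul_den_eq_num _
      have e1 : (r1.den : ℚ) * r1 = r1.num := by
        rw [mul_comm]; exact Rat.mul_den_eq_num _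
      have : (r1.num * r0.den : ℚ) * r0 + (-(r0.num * r1.den) : ℚ) * r1 = 0 := by
        rw [mul_assoc, e0]
        rw [neg_mul, mul_assoc, e1]
        ring
      exact_mod_cast this
    simpa [Fin.sum_univ_two] using this

lemma not_li (x : Fin 2 → ℝ) (hx : Module.finrank ℤ ↥(Gx x) = 2) :
    ¬ LinearIndependent ℤ ![(1:ℝ), x 0, x 1] := by
  intro hli
  haveI := finite_gx x
  set v : Fin 3 → ↥(Gx x) := ![⟨1, one_mem_gx x⟩, ⟨x 0, xi_mem_gx x 0⟩, ⟨x 1, xi_mem_gx x 1⟩] with hv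
  have hcomp : (((Gx x).subtype).toIntLinearMap) ∘ v = ![(1:ℝ), x 0, x 1] := by
    funext i; fin_cases i <;> rfl
  have hliv : LinearIndependent ℤ v :=
    LinearIndependent.of_comp (((Gx x).subtype).toIntLinearMap) (hcomp ▸ hli)
  have := hliv.fintype_card_le_finrank
  rw [hx] at this
  simp at this
lemma exists_relation (x : Fin 2 → ℝ) (hx : Module.finrank ℤ ↥(Gx x) = 2) :
    ∃ a b c : ℤ, ¬(b = 0 ∧ c = 0) ∧ (a:ℝ) + (b:ℝ) * x 0 + (c:ℝ) * x 1 = 0 := by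
  have h := not_li x hx
  rw [Fintype.not_linearIndependent_iff] at h
  obtain ⟨g, hg, i, hi⟩ := h
  refine ⟨g 0, g 1, g 2, ?_, ?_⟩
  · rintro ⟨h1, h2⟩
    have h0 : g 0 = 0 := by
      have := hg
      rw [Fin.sum_univ_three] at this
      simp [h1, h2, zsmul_eq_mul] at this
      exact_mod_cast this
    fin_cases i <;> simp_all
  · have := hg
    rw [Fin.sum_univ_three] at this
    simpa [zsmul_eq_mul] using this

lemma exists_normalized_relation (x : Fin 2 → ℝ) (hx : Module.finrank ℤ ↥(Gx x) = 2) :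
    ∃ (B C : ℤ) (k : ℚ), Int.gcd B C = 1 ∧ (B:ℝ) * x 0 + (C:ℝ) * x 1 = (k:ℝ) := by
  obtain ⟨a, b, c, hbc, hrel⟩ := exists_relation x hx
  set g : ℤ := (Int.gcd b c : ℤ) with hg
  have hgpos : 0 < Int.gcd b c := by
    rcases Nat.eq_zero_or_pos (Int.gcd b c) with h | h
    · exact absurd (Int.gcd_eq_zero_iff.mp h) hbc
    · exact h
  have hgz : (g:ℝ) ≠ 0 := by
    simp [hg]; exact fun h1 h2 => hbc ⟨h1, h2⟩
  refine ⟨b / g, c / g, (-a : ℚ) / (g : ℚ), Int.gcd_div_gcd_div_gcd hgpos, ?_⟩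
  have hb : g * (b / g) = b := Int.mul_ediv_cancel' (Int.gcd_dvd_left b c)
  have hc : g * (c / g) = c := Int.mul_ediv_cancel' (Int.gcd_dvd_right b c)
  have hq : (((-a : ℚ) / (g : ℚ) : ℚ) : ℝ) = (-a : ℝ) / (g : ℝ) := by push_cast; ring
  rw [hq, eq_div_iff hgz]
  have hbr : ((b/g : ℤ) : ℝ) * (g:ℝ) = (b:ℝ) := by
    rw [← Int.cast_mul, mul_comm]; exact_mod_cast congrArg (Int.cast : ℤ → ℝ) hb
  have hcr : ((c/g : ℤ) : ℝ) * (g:ℝ) = (c:ℝ) := by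
    rw [← Int.cast_mul, mul_comm]; exact_mod_cast congrArg (Int.cast : ℤ → ℝ) hc
  have : ((b/g : ℤ) : ℝ) * x 0 * (g:ℝ) + ((c/g : ℤ) : ℝ) * x 1 * (g:ℝ) = (b:ℝ) * x 0 + (c:ℝ) * x 1 := by
    calc ((b/g : ℤ) : ℝ) * x 0 * (g:ℝ) + ((c/g : ℤ) : ℝ) * x 1 * (g:ℝ)
        = (((b/g : ℤ) : ℝ) * (g:ℝ)) * x 0 + (((c/g : ℤ) : ℝ) * (g:ℝ)) * x 1 := by ring
      _ = (b:ℝ) * x 0 + (c:ℝ) * x 1 := by rw [hbr, hcr]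
  rw [add_mul, this]
  linarith [hrel]

lemma relation_unique (x : Fin 2 → ℝ) (hx : Module.finrank ℤ ↥(Gx x) = 2)
    {B C : ℤ} {k : ℚ} (hBC : ¬(B = 0 ∧ C = 0))
    (hrel : (B:ℝ) * x 0 + (C:ℝ) * x 1 = (k:ℝ)) :
    ∀ p q s : ℚ, (p:ℝ) * x 0 + (q:ℝ) * x 1 = (s:ℝ) →
      ∃ t : ℚ, p = t * B ∧ q = t * C ∧ s = t * k := by
  intro p q s hpq
  by_cases hD : p * C - q * B = 0
  · have sval : ∀ t : ℚ, p = t * B → q = t * C → s = t * k := by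
      intro t h1 h2
      have : (s:ℝ) = ((t * k : ℚ):ℝ) := by
        push_cast
        rw [← hpq, h1, h2, ← hrel]
        push_cast
        ring
      exact_mod_cast this
    by_cases hB : B = 0
    · have hC : C ≠ 0 := fun h => hBC ⟨hB, h⟩
      have hp : p = 0 := by
        have : p * C = 0 := by rw [hB] at hD; simpa using hD
        rcases mul_eq_zero.mp this with h | h
        · exact h
        · exact absurd h (by exact_mod_cast hC)
      have h1 : p = (q / C) * B := by rw [hB, hp]; simp
      have h2 : q = (q / C) * C := by field_simp
      exact ⟨q / C, h1, h2, sval _ h1 h2⟩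
    · have hBQ : (B:ℚ) ≠ 0 := by exact_mod_cast hB
      have h1 : p = (p / B) * B := by field_simp
      have h2 : q = (p / B) * C := by
        field_simp
        linarith [sub_eq_zero.mp hD]
      exact ⟨p / B, h1, h2, sval _ h1 h2⟩
  · exfalso
    apply not_both_rational x hx
    constructor
    · refine ⟨(C * s - q * k) / (p * C - q * B), ?_⟩
      have h0 : ((p * C - q * B : ℚ):ℝ) * x 0 = ((C * s - q * k : ℚ):ℝ) := by
        push_cast
        linear_combination (C:ℝ) * hpq - (q:ℝ) * hrel
      have hDR : ((p * C - q * B : ℚ):ℝ) ≠ 0 := by exact_mod_cast hD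
      rw [Rat.cast_div]
      exact (eq_div_iff hDR).mpr (by rw [mul_comm] at h0; exact h0)
    · refine ⟨(p * k - B * s) / (p * C - q * B), ?_⟩
      have h0 : ((p * C - q * B : ℚ):ℝ) * x 1 = ((p * k - B * s : ℚ):ℝ) := by
        push_cast
        linear_combination (p:ℝ) * hrel - (B:ℝ) * hpq
      have hDR : ((p * C - q * B : ℚ):ℝ) ≠ 0 := by exact_mod_cast hD
      rw [Rat.cast_div]
      exact (eq_div_iff hDR).mpr (by rw [mul_comm] at h0; exact h0)
lemma hBC_of_gcd {B C : ℤ} (hgcd : Int.gcd B C = 1) : ¬(B = 0 ∧ C = 0) := by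
  rintro ⟨rfl, rfl⟩; simp [Int.gcd] at hgcd

lemma isRatHyp_H0 {B C : ℤ} (k : ℚ) (hBC : ¬(B = 0 ∧ C = 0)) :
    IsRatHyperplane {z : Fin 2 → ℝ | (B:ℝ) * z 0 + (C:ℝ) * z 1 = (k:ℝ)} := by
  refine ⟨![(B:ℚ), (C:ℚ)], k, ?_, ?_⟩
  · intro h
    apply hBC
    constructor
    · have := congrFun h 0; simpa using this
    · have := congrFun h 1; simpa using this
  · ext z
    simp [Fin.sum_univ_two]

lemma fx_eq (x : Fin 2 → ℝ) (hx : Module.finrank ℤ ↥(Gx x) = 2)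
    {B C : ℤ} {k : ℚ} (hgcd : Int.gcd B C = 1)
    (hrel : (B:ℝ) * x 0 + (C:ℝ) * x 1 = (k:ℝ)) :
    Fx x = {z : Fin 2 → ℝ | (B:ℝ) * z 0 + (C:ℝ) * z 1 = (k:ℝ)} := by
  have hBC := hBC_of_gcd hgcd
  apply subset_antisymm
  · exact Set.sInter_subset_of_mem ⟨isRatHyp_H0 k hBC, hrel⟩
  · intro z hz H hH
    obtain ⟨⟨h, k'', hne, rfl⟩, hxH⟩ := hH
    have hxH' : (h 0 : ℝ) * x 0 + (h 1 : ℝ) * x 1 = (k'' : ℝ) := by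
      have := hxH
      rwa [Set.mem_setOf_eq, Fin.sum_univ_two] at this
    obtain ⟨t, h0, h1, hk⟩ := relation_unique x hx hBC hrel (h 0) (h 1) k'' hxH'
    have hz' : (B:ℝ) * z 0 + (C:ℝ) * z 1 = (k:ℝ) := hz
    rw [Set.mem_setOf_eq, Fin.sum_univ_two]
    have e0 : ((h 0 : ℚ) : ℝ) = (t:ℝ) * (B:ℝ) := by exact_mod_cast congrArg (Rat.cast : ℚ → ℝ) h0
    have e1 : ((h 1 : ℚ) : ℝ) = (t:ℝ) * (C:ℝ) := by exact_mod_cast congrArg (Rat.cast : ℚ → ℝ) h1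
    have e2 : ((k'' : ℚ) : ℝ) = (t:ℝ) * (k:ℝ) := by exact_mod_cast congrArg (Rat.cast : ℚ → ℝ) hk
    rw [e0, e1, e2]
    linear_combination (t:ℝ) * hz'

lemma den_dvd_of_mul_int (k : ℚ) (d : ℕ) (m : ℤ) (hd : 0 < d) (h : (d:ℚ) * k = (m:ℚ)) :
    k.den ∣ d := by
  have hdq : (d:ℚ) ≠ 0 := by exact_mod_cast hd.ne'
  have hk : k = Rat.divInt m (d:ℤ) := by
    rw [Rat.divInt_eq_div]
    push_cast
    field_simp
    linarith [h]
  have := Rat.den_dvd m (d:ℤ)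
  rw [← hk] at this
  exact_mod_cast this

lemma den_pos_and_int (y : Fin 2 → ℝ) (hy : IsRationalPoint y) :
    0 < den y ∧ ∀ i, ∃ m : ℤ, (den y : ℝ) * y i = (m:ℝ) := by
  obtain ⟨q0, h0⟩ := hy 0
  obtain ⟨q1, h1⟩ := hy 1
  have e0 : (q0.den : ℚ) * q0 = q0.num := by rw [mul_comm]; exact Rat.mul_den_eq_num _
  have e1 : (q1.den : ℚ) * q1 = q1.num := by rw [mul_comm]; exact Rat.mul_den_eq_num _
  have hmem : (q0.den * q1.den) ∈ {d : ℕ | 0 < d ∧ ∀ i, ∃ m : ℤ, (d:ℝ) * y i = (m:ℝ)} := by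
    refine ⟨Nat.mul_pos q0.pos q1.pos, ?_⟩
    intro i
    fin_cases i
    · show ∃ m : ℤ, ((q0.den * q1.den : ℕ):ℝ) * y 0 = (m:ℝ)
      refine ⟨q1.den * q0.num, ?_⟩
      rw [h0]
      have : ((q0.den * q1.den : ℕ) : ℚ) * q0 = ((q1.den * q0.num : ℤ) : ℚ) := by
        push_cast
        linear_combination (q1.den : ℚ) * e0
      exact_mod_cast this
    · show ∃ m : ℤ, ((q0.den * q1.den : ℕ):ℝ) * y 1 = (m:ℝ)
      refine ⟨q0.den * q1.num, ?_⟩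
      rw [h1]
      have : ((q0.den * q1.den : ℕ) : ℚ) * q1 = ((q0.den * q1.num : ℤ) : ℚ) := by
        push_cast
        linear_combination (q0.den : ℚ) * e1
      exact_mod_cast this
  exact Nat.sInf_mem ⟨_, hmem⟩


lemma den_self_mul (k : ℚ) : (k.den : ℚ) * k = k.num := by rw [mul_comm]; exact Rat.mul_den_eq_num _

lemma dF_eq (x : Fin 2 → ℝ) (hx : Module.finrank ℤ ↥(Gx x) = 2)
    {B C : ℤ} {k : ℚ} (hgcd : Int.gcd B C = 1)
    (hrel : (B:ℝ) * x 0 + (C:ℝ) * x 1 = (k:ℝ)) :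
    dF (Fx x) = k.den := by
  have hFx := fx_eq x hx hgcd hrel
  -- Bezout coefficients
  set u := Int.gcdA B C with hu
  set v := Int.gcdB B C with hv
  have hbez : (1:ℤ) = B * u + C * v := by
    have := Int.gcd_eq_gcd_ab B C
    rw [hgcd] at this
    exact_mod_cast this
  have hbezQ : (1:ℚ) = (B:ℚ) * (u:ℚ) + (C:ℚ) * (v:ℚ) := by exact_mod_cast hbez
  -- the witness point
  set y : Fin 2 → ℝ := ![((k * u : ℚ):ℝ), ((k * v : ℚ):ℝ)] with hy
  have hy0 : y 0 = ((k * u : ℚ):ℝ) := rfl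
  have hy1 : y 1 = ((k * v : ℚ):ℝ) := rfl
  have hyrat : IsRationalPoint y := by
    intro i; fin_cases i
    · exact ⟨k * u, rfl⟩
    · exact ⟨k * v, rfl⟩
  have hyF : y ∈ Fx x := by
    rw [hFx]
    show (B:ℝ) * y 0 + (C:ℝ) * y 1 = (k:ℝ)
    rw [hy0, hy1]
    have : (B:ℚ) * (k * u) + (C:ℚ) * (k * v) = k := by linear_combination k * hbezQ.symm
    exact_mod_cast this
  -- den y = k.den
  have hdeny : den y = k.den := by
    have memT : k.den ∈ {d : ℕ | 0 < d ∧ ∀ i, ∃ m : ℤ, (d:ℝ) * y i = (m:ℝ)} := by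
      refine ⟨k.pos, ?_⟩
      intro i; fin_cases i
      · show ∃ m : ℤ, (k.den:ℝ) * y 0 = (m:ℝ)
        refine ⟨k.num * u, ?_⟩
        rw [hy0]
        have : (k.den:ℚ) * (k * u) = ((k.num * u : ℤ):ℚ) := by
          push_cast
          linear_combination (u:ℚ) * den_self_mul k
        exact_mod_cast this
      · show ∃ m : ℤ, (k.den:ℝ) * y 1 = (m:ℝ)
        refine ⟨k.num * v, ?_⟩
        rw [hy1]
        have : (k.den:ℚ) * (k * v) = ((k.num * v : ℤ):ℚ) := by
          push_cast
          linear_combination (v:ℚ) * den_self_mul k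
        exact_mod_cast this
    have hle : den y ≤ k.den := Nat.sInf_le memT
    have hmem := Nat.sInf_mem (⟨_, memT⟩ : Set.Nonempty _)
    obtain ⟨hpos, hint⟩ := hmem
    obtain ⟨m0, hm0⟩ := hint 0
    obtain ⟨m1, hm1⟩ := hint 1
    rw [hy0] at hm0
    rw [hy1] at hm1
    have hm0' : ((den y : ℚ) * (k * u)) = (m0:ℚ) := by exact_mod_cast hm0
    have hm1' : ((den y : ℚ) * (k * v)) = (m1:ℚ) := by exact_mod_cast hm1
    have hkint : (den y : ℚ) * k = ((B * m0 + C * m1 : ℤ):ℚ) := by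
      push_cast
      linear_combination (B:ℚ) * hm0' + (C:ℚ) * hm1' + ((den y : ℚ) * k) * hbezQ
    have hdvd : k.den ∣ den y := den_dvd_of_mul_int k _ _ hpos hkint
    exact le_antisymm hle (Nat.le_of_dvd hpos hdvd)
  have memS : k.den ∈ {d : ℕ | ∃ y ∈ Fx x, IsRationalPoint y ∧ den y = d} :=
    ⟨y, hyF, hyrat, hdeny⟩
  apply le_antisymm (Nat.sInf_le memS)
  obtain ⟨y', hy'F, hy'rat, hden'⟩ := Nat.sInf_mem (⟨_, memS⟩ : Set.Nonempty _)
  obtain ⟨q0, h0⟩ := hy'rat 0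
  obtain ⟨q1, h1⟩ := hy'rat 1
  have hy'H : (B:ℝ) * y' 0 + (C:ℝ) * y' 1 = (k:ℝ) := by
    rw [hFx] at hy'F; exact hy'F
  rw [h0, h1] at hy'H
  have hy'Q : (B:ℚ) * q0 + (C:ℚ) * q1 = k := by exact_mod_cast hy'H
  obtain ⟨hpos, hint⟩ := den_pos_and_int y' hy'rat
  obtain ⟨m0, hm0⟩ := hint 0
  obtain ⟨m1, hm1⟩ := hint 1
  rw [h0] at hm0; rw [h1] at hm1
  have hm0' : (den y' : ℚ) * q0 = (m0:ℚ) := by exact_mod_cast hm0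
  have hm1' : (den y' : ℚ) * q1 = (m1:ℚ) := by exact_mod_cast hm1
  have hkint : (den y' : ℚ) * k = ((B * m0 + C * m1 : ℤ):ℚ) := by
    push_cast
    linear_combination (B:ℚ) * hm0' + (C:ℚ) * hm1' + (den y' : ℚ) * hy'Q.symm
  have hdvd : k.den ∣ den y' := den_dvd_of_mul_int k _ _ hpos hkint
  rw [← hden']
  exact Nat.le_of_dvd hpos hdvd
lemma mem_gx_repr (x : Fin 2 → ℝ) {r : ℝ} (hr : r ∈ Gx x) :
    ∃ m0 m1 m2 : ℤ, r = (m0:ℝ) + (m1:ℝ) * x 0 + (m2:ℝ) * x 1 := by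
  induction hr using AddSubgroup.closure_induction with
  | mem y hy =>
    rcases hy with hy | ⟨i, rfl⟩
    · exact ⟨1, 0, 0, by simp [hy]⟩
    · fin_cases i
      · exact ⟨0, 1, 0, by simp⟩
      · exact ⟨0, 0, 1, by simp⟩
  | zero => exact ⟨0, 0, 0, by simp⟩
  | add a b _ _ ha hb =>
    obtain ⟨a0, a1, a2, rfl⟩ := ha
    obtain ⟨b0, b1, b2, rfl⟩ := hb
    exact ⟨a0 + b0, a1 + b1, a2 + b2, by push_cast; ring⟩
  | neg a _ ha =>
    obtain ⟨a0, a1, a2, rfl⟩ := ha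
    exact ⟨-a0, -a1, -a2, by push_cast; ring⟩

lemma tden_dvd_natAbs {t : ℚ} {B : ℤ} {m : ℤ} (h : (m:ℚ) = t * (B:ℚ)) :
    t.den ∣ B.natAbs := by
  by_cases hB : B = 0
  · subst hB; simp
  · have hBQ : (B:ℚ) ≠ 0 := by exact_mod_cast hB
    have ht : t = Rat.divInt m B := by
      rw [Rat.divInt_eq_div]
      field_simp
      linarith [h]
    have := Rat.den_dvd m B
    rw [← ht] at this
    exact Int.natCast_dvd_natCast.mp ((Int.dvd_natAbs).mpr this)

lemma gx_rat_eq (x : Fin 2 → ℝ) (hx : Module.finrank ℤ ↥(Gx x) = 2)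
    {B C : ℤ} {k : ℚ} (hgcd : Int.gcd B C = 1)
    (hrel : (B:ℝ) * x 0 + (C:ℝ) * x 1 = (k:ℝ)) :
    {r : ℝ | r ∈ Gx x ∧ ∃ q : ℚ, r = (q : ℝ)}
      = {r : ℝ | ∃ m : ℤ, r = (m : ℝ) / (k.den : ℝ)} := by
  have hBC := hBC_of_gcd hgcd
  have hdenR : (k.den : ℝ) ≠ 0 := by
    exact_mod_cast k.pos.ne'
  have hkR : (k:ℝ) = (k.num:ℝ) / (k.den:ℝ) := by exact_mod_cast (Rat.num_div_den k).symm
  ext r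
  simp only [Set.mem_setOf_eq]
  constructor
  · rintro ⟨hrG, q, rfl⟩
    obtain ⟨m0, m1, m2, hrepr⟩ := mem_gx_repr x hrG
    have hpq : ((m1:ℚ):ℝ) * x 0 + ((m2:ℚ):ℝ) * x 1 = ((q - m0 : ℚ):ℝ) := by
      push_cast
      push_cast at hrepr
      linarith [hrepr]
    obtain ⟨t, h1, h2, hk⟩ := relation_unique x hx hBC hrel (m1:ℚ) (m2:ℚ) (q - m0) hpq
    have hd1 : t.den ∣ B.natAbs := tden_dvd_natAbs h1
    have hd2 : t.den ∣ C.natAbs := tden_dvd_natAbs h2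
    have hden1 : t.den = 1 := Nat.dvd_one.mp (hgcd ▸ Nat.dvd_gcd hd1 hd2)
    have htnum : t = (t.num : ℚ) := by
      have := Rat.num_div_den t
      rw [hden1] at this
      simpa using this.symm
    refine ⟨m0 * k.den + t.num * k.num, ?_⟩
    have hq : q = ((m0 * k.den + t.num * k.num : ℤ):ℚ) / (k.den : ℚ) := by
      have hkq : k = (k.num:ℚ) / (k.den:ℚ) := (Rat.num_div_den k).symm
      have hqe : q - (m0:ℚ) = (t.num:ℚ) * k := by rw [hk, ← htnum]
      have hdenQ : (k.den : ℚ) ≠ 0 := by exact_mod_cast k.pos.ne'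
      field_simp
      rw [hkq] at hqe
      field_simp at hqe
      push_cast; linarith [hqe]
    rw [hq]
    push_cast
    ring
  · rintro ⟨m, rfl⟩
    constructor
    · -- membership in Gx
      have hkmem : (k:ℝ) ∈ Gx x := by
        rw [← hrel]
        have e : (B:ℝ) * x 0 + (C:ℝ) * x 1 = B • x 0 + C • x 1 := by
          simp [zsmul_eq_mul]
        rw [e]
        exact AddSubgroup.add_mem _ (AddSubgroup.zsmul_mem _ (xi_mem_gx x 0) B)
          (AddSubgroup.zsmul_mem _ (xi_mem_gx x 1) C)
      -- Bezout for (k.num, k.den)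
      have hg : Int.gcd k.num (k.den : ℤ) = 1 := by
        have := k.reduced
        simpa [Int.gcd] using this
      set α := Int.gcdA k.num (k.den : ℤ) with hα
      set β := Int.gcdB k.num (k.den : ℤ) with hβ
      have hbez : (1:ℤ) = k.num * α + (k.den:ℤ) * β := by
        have := Int.gcd_eq_gcd_ab k.num (k.den : ℤ)
        rw [hg] at this
        exact_mod_cast this
      have hbezR : (1:ℝ) = (k.num:ℝ) * (α:ℝ) + (k.den:ℝ) * (β:ℝ) := by exact_mod_cast hbez
      have hval : (m:ℝ) / (k.den:ℝ) = ((m * α : ℤ) • (k:ℝ)) + ((m * β : ℤ) • (1:ℝ)) := by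
        simp only [zsmul_eq_mul]
        rw [hkR]
        push_cast
        field_simp
        linear_combination (m:ℝ) * hbezR
      rw [hval]
      exact AddSubgroup.add_mem _ (AddSubgroup.zsmul_mem _ hkmem _)
        (AddSubgroup.zsmul_mem _ (one_mem_gx x) _)
    · exact ⟨(m:ℚ) / (k.den:ℚ), by push_cast; ring⟩



/-- If `x ∈ ℝ²` has `rank G_x = 2`, then `F_x` is a rational line,
and `d_{F_x}` is the denominator of the smallest positive nonzero rational in `G_x`;
equivalently, `G_x ∩ ℚ = ℤ·(1/d_{F_x})`. -/
theorem Fx_line_and_rationals_of_Gx (x : Fin 2 → ℝ)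
    (hx : Module.finrank ℤ ↥(Gx x) = 2) :
    IsRatHyperplane (Fx x) ∧
    {r : ℝ | r ∈ Gx x ∧ ∃ q : ℚ, r = (q : ℝ)}
      = {r : ℝ | ∃ m : ℤ, r = (m : ℝ) / (dF (Fx x) : ℝ)} := by
  obtain ⟨B, C, k, hgcd, hrel⟩ := exists_normalized_relation x hx
  constructor
  · rw [fx_eq x hx hgcd hrel]
    exact isRatHyp_H0 k (hBC_of_gcd hgcd)
  · rw [dF_eq x hx hgcd hrel]
    exact gx_rat_eq x hx hgcd hrel
end

section
/- Consider the action of 𝒢₁ = GL(1,ℤ) ⋉ ℤ on ℝ, i.e., the maps x ↦ ±x + t with t ∈ ℤ. (i) If x ∈ ℝ is irrational (rank(G_x) = 2), then for all y ∈ ℝ, orb(x) = orb(y) iff G_x = G_y. (ii) If x is rational with G_x = ℤ·(1/d) and d ≤ 4, then for all y ∈ ℝ, orb(x) = orb(y) iff G_x = G_y. (iii) If x is rational with G_x = ℤ·(1/d) and d > 4, then the set of 𝒢₁-orbits of points y ∈ ℝ with G_y = G_x has exactly max(1, φ(d)/2) elements, where φ is Euler's totient function; equivalently, for coprime p, p'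 with 0 < p, p' < d, orb(p/d) = orb(p'/d) iff p' ≡ ±p (mod d). -/
/-- `y` is in the `𝒢₁ = GL(1,ℤ) ⋉ ℤ`-orbit of `x`, i.e. `y = ±x + t`, `t ∈ ℤ`. -/
def SameOrbit1 (x y : ℝ) : Prop :=
  ∃ u t : ℤ, (u = 1 ∨ u = -1) ∧ y = (u : ℝ) * x + (t : ℝ)

/-- The subgroup `G_x = ℤ + ℤx` of the additive reals. -/
def Gx1 (x : ℝ) : AddSubgroup ℝ :=
  AddSubgroup.closure {(1 : ℝ), x}

lemma mem_Gx1 {x z : ℝ} : z ∈ Gx1 x ↔ ∃ a b : ℤ, z = (a : ℝ) + (b : ℝ) * x := by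
  rw [Gx1, AddSubgroup.mem_closure_pair]
  constructor
  · rintro ⟨m, n, rfl⟩; exact ⟨m, n, by push_cast [zsmul_eq_mul]; ring⟩
  · rintro ⟨a, b, rfl⟩; exact ⟨a, b, by push_cast [zsmul_eq_mul]; ring⟩

lemma so_refl (x : ℝ) : SameOrbit1 x x := ⟨1, 0, Or.inl rfl, by push_cast; ring⟩

lemma so_symm {x y : ℝ} (h : SameOrbit1 x y) : SameOrbit1 y x := by
  obtain ⟨u, t, hu, hy⟩ := h
  rcases hu with rfl | rfl
  · exact ⟨1, -t, Or.inl rfl, by push_cast at hy ⊢; linarith⟩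
  · exact ⟨-1, t, Or.inr rfl, by push_cast at hy ⊢; linarith⟩

lemma so_trans {x y z : ℝ} (h : SameOrbit1 x y) (h' : SameOrbit1 y z) : SameOrbit1 x z := by
  obtain ⟨u, t, hu, hy⟩ := h
  obtain ⟨u', t', hu', hz⟩ := h'
  refine ⟨u' * u, u' * t + t', ?_, ?_⟩
  · rcases hu with rfl | rfl <;> rcases hu' with rfl | rfl <;> simp
  · rw [hz, hy]; push_cast; ring

lemma orbitSet_eq_iff {x y : ℝ} :
    {z | SameOrbit1 x z} = {z | SameOrbit1 y z} ↔ SameOrbit1 x y := by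
  constructor
  · intro h
    have hx : x ∈ {z | SameOrbit1 y z} := h ▸ so_refl x
    exact so_symm hx
  · intro h
    ext z
    exact ⟨fun h' => so_trans (so_symm h) h', fun h' => so_trans h h'⟩

lemma Gx1_eq_of_orbit {x y : ℝ} (h : SameOrbit1 x y) : Gx1 x = Gx1 y := by
  obtain ⟨u, t, hu, rfl⟩ := h
  ext z
  rw [mem_Gx1, mem_Gx1]
  rcases hu with rfl | rfl
  · constructor
    · rintro ⟨a, b, rfl⟩; exact ⟨a - b * t, b, by push_cast; ring⟩
    · rintro ⟨a, b, rfl⟩; exact ⟨a + b * t, b, by push_cast; ring⟩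
  · constructor
    · rintro ⟨a, b, rfl⟩; exact ⟨a + b * t, -b, by push_cast; ring⟩
    · rintro ⟨a, b, rfl⟩; exact ⟨a + b * t, -b, by push_cast; ring⟩

lemma Gx1_div {m : ℤ} {d : ℕ} (hd : 0 < d) (h : IsCoprime m (d : ℤ)) :
    Gx1 ((m : ℝ) / d) = Gx1 ((d : ℝ))⁻¹ := by
  have hd0 : (d : ℝ) ≠ 0 := Nat.cast_ne_zero.mpr hd.ne'
  obtain ⟨u, v, huv⟩ := h
  have hb : (u : ℝ) * m + v * d = 1 := by exact_mod_cast congrArg (Int.cast : ℤ → ℝ) huv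
  ext z
  rw [mem_Gx1, mem_Gx1]
  constructor
  · rintro ⟨a, b, rfl⟩
    exact ⟨a, b * m, by push_cast; field_simp⟩
  · rintro ⟨a, b, rfl⟩
    refine ⟨a + b * v, b * u, ?_⟩
    push_cast
    field_simp
    linear_combination (-(b : ℝ)) * hb

lemma Gx1_inv_iff {d : ℕ} (hd : 0 < d) {y : ℝ} :
    Gx1 y = Gx1 ((d : ℝ))⁻¹ ↔ ∃ m : ℤ, IsCoprime m (d : ℤ) ∧ y = (m : ℝ) / d := by
  have hd0 : (d : ℝ) ≠ 0 := Nat.cast_ne_zero.mpr hd.ne'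
  constructor
  · intro h
    have hy : y ∈ Gx1 ((d : ℝ))⁻¹ := by
      rw [← h, mem_Gx1]; exact ⟨0, 1, by push_cast; ring⟩
    rw [mem_Gx1] at hy
    obtain ⟨a, b, hab⟩ := hy
    have hyv : y = ((a * d + b : ℤ) : ℝ) / d := by rw [hab]; push_cast; field_simp
    refine ⟨a * d + b, ?_, hyv⟩
    have hinv : ((d : ℝ))⁻¹ ∈ Gx1 y := by
      rw [h, mem_Gx1]; exact ⟨0, 1, by push_cast; ring⟩
    rw [mem_Gx1] at hinv
    obtain ⟨c, e, hce⟩ := hinv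
    rw [hyv] at hce
    have h1 : (1 : ℝ) = (c : ℝ) * d + e * (a * d + b : ℤ) := by
      field_simp at hce
      push_cast at hce ⊢
      linarith [hce]
    have h1' : (1 : ℤ) = c * d + e * (a * d + b) := by exact_mod_cast h1
    exact ⟨e, c, by linarith⟩
  · rintro ⟨m, hm, rfl⟩
    exact Gx1_div hd hm

lemma so_div_iff {p p' : ℤ} {d : ℕ} (hd : 0 < d) :
    SameOrbit1 ((p : ℝ) / d) ((p' : ℝ) / d) ↔
      (p' ≡ p [ZMOD (d : ℤ)] ∨ p' ≡ -p [ZMOD (d : ℤ)]) := by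
  have hd0 : (d : ℝ) ≠ 0 := Nat.cast_ne_zero.mpr hd.ne'
  constructor
  · rintro ⟨u, t, hu, heq⟩
    have hZ : (p' : ℤ) = u * p + t * d := by
      have : (p' : ℝ) = u * p + t * d := by field_simp at heq; linarith [heq]
      exact_mod_cast this
    rcases hu with rfl | rfl
    · exact Or.inl (Int.modEq_iff_dvd.mpr ⟨-t, by linarith⟩)
    · exact Or.inr (Int.modEq_iff_dvd.mpr ⟨-t, by linarith⟩)
  · intro h
    rcases h with h | h
    · obtain ⟨k, hk⟩ := Int.modEq_iff_dvd.mp h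
      have hk' : (p : ℝ) - p' = d * k := by exact_mod_cast congrArg (Int.cast : ℤ → ℝ) hk
      exact ⟨1, -k, Or.inl rfl, by push_cast; field_simp; linarith⟩
    · obtain ⟨k, hk⟩ := Int.modEq_iff_dvd.mp h
      have hk' : -(p : ℝ) - p' = d * k := by exact_mod_cast congrArg (Int.cast : ℤ → ℝ) hk
      exact ⟨-1, -k, Or.inr rfl, by push_cast; field_simp; linarith⟩

lemma small_units {d : ℕ} (hd1 : 0 < d) (hd : d ≤ 4) (a b : ℤ)
    (ha : IsCoprime a (d : ℤ)) (hb : IsCoprime b (d : ℤ)) :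
    a ≡ b [ZMOD (d : ℤ)] ∨ a ≡ -b [ZMOD (d : ℤ)] := by
  have key : ∀ u v : ZMod d, IsUnit u → IsUnit v → u = v ∨ u = -v := by
    interval_cases d <;> decide
  have hua : IsUnit ((a : ZMod d)) := by
    obtain ⟨u, v, huv⟩ := ha
    refine IsUnit.of_mul_eq_one (u : ZMod d) ?_
    have : ((u * a + v * d : ℤ) : ZMod d) = 1 := by rw [huv]; simp
    push_cast at this
    simpa [ZMod.natCast_self, mul_comm] using this
  have hub : IsUnit ((b : ZMod d)) := by
    obtain ⟨u, v, huv⟩ := hb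
    refine IsUnit.of_mul_eq_one (u : ZMod d) ?_
    have : ((u * b + v * d : ℤ) : ZMod d) = 1 := by rw [huv]; simp
    push_cast at this
    simpa [ZMod.natCast_self, mul_comm] using this
  rcases key _ _ hua hub with h | h
  · exact Or.inl ((ZMod.intCast_eq_intCast_iff _ _ _).mp h)
  · refine Or.inr ((ZMod.intCast_eq_intCast_iff _ _ _).mp ?_)
    push_cast
    exact h

lemma half_totient {d : ℕ} (hd : 4 < d) :
    (Finset.filter (fun p => 0 < p ∧ 2 * p < d ∧ Nat.Coprime p d) (Finset.range d)).card
      = d.totient / 2 := by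
  classical
  set A := Finset.filter (fun p => 0 < p ∧ 2 * p < d ∧ Nat.Coprime p d) (Finset.range d) with hA
  set B := Finset.filter (fun p => d < 2 * p ∧ Nat.Coprime p d) (Finset.range d) with hB
  have hsplit : Finset.filter d.Coprime (Finset.range d) = A ∪ B := by
    ext p
    simp only [hA, hB, Finset.mem_union, Finset.mem_filter, Finset.mem_range]
    constructor
    · rintro ⟨hp, hcop⟩
      have hcop' : Nat.Coprime p d := Nat.coprime_comm.mp hcop
      have hp0 : 0 < p := by
        rcases Nat.eq_zero_or_pos p with rfl | h
        · simp [Nat.Coprime] at hcop'; omega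
        · exact h
      have hne : 2 * p ≠ d := by
        intro h
        have : p ∣ d := ⟨2, by omega⟩
        have h2 := Nat.gcd_eq_left this
        have := hcop'
        simp [Nat.Coprime] at this
        omega
      rcases lt_or_gt_of_ne hne with h | h
      · exact Or.inl ⟨hp, hp0, h, hcop'⟩
      · exact Or.inr ⟨hp, h, hcop'⟩
    · rintro (⟨hp, _, _, hcop⟩ | ⟨hp, _, hcop⟩) <;> exact ⟨hp, Nat.coprime_comm.mp hcop⟩
  have hdisj : Disjoint A B := by
    rw [Finset.disjoint_left]
    intro p hp hq
    simp only [hA, hB, Finset.mem_filter] at hp hq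
    omega
  have hcardeq : A.card = B.card := by
    apply Finset.card_bij' (fun p _ => d - p) (fun p _ => d - p)
    · intro p hp
      simp only [hA, hB, Finset.mem_filter, Finset.mem_range] at hp ⊢
      refine ⟨by omega, by omega, ?_⟩
      have : Nat.Coprime (d - p) p := by
        rw [Nat.coprime_sub_self_left (by omega)]
        exact Nat.coprime_comm.mp hp.2.2.2
      calc Nat.gcd (d - p) d = Nat.gcd (d - p) ((d - p) + p) := by congr 1; omega
        _ = Nat.gcd (d - p) p := by rw [add_comm, Nat.gcd_add_self_right]
        _ = 1 := this
    · intro p hp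
      simp only [hA, hB, Finset.mem_filter, Finset.mem_range] at hp ⊢
      refine ⟨by omega, by omega, by omega, ?_⟩
      have : Nat.Coprime (d - p) p := by
        rw [Nat.coprime_sub_self_left (by omega)]
        exact Nat.coprime_comm.mp hp.2.2
      calc Nat.gcd (d - p) d = Nat.gcd (d - p) ((d - p) + p) := by congr 1; omega
        _ = Nat.gcd (d - p) p := by rw [add_comm, Nat.gcd_add_self_right]
        _ = 1 := this
    · intro p hp
      simp only [hA, Finset.mem_filter, Finset.mem_range] at hp
      omega
    · intro p hp
      simp only [hB, Finset.mem_filter, Finset.mem_range] at hp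
      omega
  have htot : d.totient = A.card + B.card := by
    rw [Nat.totient, hsplit, Finset.card_union_of_disjoint hdisj]
  omega

lemma coprime_sub_nat {p d : ℕ} (h1 : 0 < p) (h2 : p < d) (h : Nat.Coprime p d) :
    Nat.Coprime (d - p) d := by
  have hc : Nat.Coprime (d - p) p := by
    rw [Nat.coprime_sub_self_left (by omega)]
    exact Nat.coprime_comm.mp h
  calc Nat.gcd (d - p) d = Nat.gcd (d - p) ((d - p) + p) := by congr 1; omega
    _ = Nat.gcd (d - p) p := by rw [add_comm, Nat.gcd_add_self_right]
    _ = 1 := hc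


/-- For the action of `𝒢₁ = GL(1,ℤ) ⋉ ℤ` on `ℝ`:
(i) for irrational `x`, `orb(x) = orb(y)` iff `G_x = G_y`;
(ii) for rational `x` with `G_x = ℤ·(1/d)` and `d ≤ 4`, `orb(x) = orb(y)` iff
`G_x = G_y`;
(iii) for `d > 4`, the set of orbits of points `y` with `G_y = ℤ·(1/d)` has exactly
`max(1, φ(d)/2)` elements; equivalently, for coprime `0 < p, p' < d`,
`orb(p/d) = orb(p'/d)` iff `p' ≡ ±p (mod d)`. -/
theorem one_dimensional_orbit_classification :
    (∀ x : ℝ, Irrational x → ∀ y : ℝ,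
      ({z | SameOrbit1 x z} = {z | SameOrbit1 y z} ↔ Gx1 x = Gx1 y)) ∧
    (∀ q : ℚ, q.den ≤ 4 → ∀ y : ℝ,
      ({z | SameOrbit1 (q : ℝ) z} = {z | SameOrbit1 y z} ↔ Gx1 (q : ℝ) = Gx1 y)) ∧
    (∀ d : ℕ, 4 < d →
      Set.ncard {O : Set ℝ |
          ∃ y : ℝ, Gx1 y = Gx1 ((d : ℝ))⁻¹ ∧ O = {z | SameOrbit1 y z}}
        = max 1 (Nat.totient d / 2) ∧
      ∀ p p' : ℕ, 0 < p → p < d → 0 < p' → p' < d →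
        Nat.gcd p d = 1 → Nat.gcd p' d = 1 →
        (SameOrbit1 ((p : ℝ) / (d : ℝ)) ((p' : ℝ) / (d : ℝ)) ↔
          ((p' : ℤ) ≡ (p : ℤ) [ZMOD (d : ℤ)] ∨ (p' : ℤ) ≡ -(p : ℤ) [ZMOD (d : ℤ)]))) := by
  refine ⟨?_, ?_, ?_⟩
  · -- (i) irrational case
    intro x hx y
    constructor
    · intro h; exact Gx1_eq_of_orbit (orbitSet_eq_iff.mp h)
    · intro h
      have hy : y ∈ Gx1 x := by
        rw [h, mem_Gx1]; exact ⟨0, 1, by push_cast; ring⟩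
      rw [mem_Gx1] at hy
      obtain ⟨a, b, hab⟩ := hy
      have hxy : x ∈ Gx1 y := by
        rw [← h, mem_Gx1]; exact ⟨0, 1, by push_cast; ring⟩
      rw [mem_Gx1] at hxy
      obtain ⟨c, e, hce⟩ := hxy
      have hkey : ((1 : ℝ) - (e : ℝ) * b) * x = (c : ℝ) + (e : ℝ) * a := by
        rw [hab] at hce; linear_combination hce
      have hk0 : (1 - e * b : ℤ) = 0 := by
        by_contra hk
        have hk' : ((1 : ℝ) - (e : ℝ) * b) ≠ 0 := by
          have h2 : ((1 - e * b : ℤ) : ℝ) ≠ 0 := Int.cast_ne_zero.mpr hk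
          push_cast at h2
          exact h2
        refine hx ⟨((c + e * a : ℤ) : ℚ) / ((1 - e * b : ℤ) : ℚ), ?_⟩
        push_cast
        rw [div_eq_iff hk']
        linear_combination -hkey
      have hb : b = 1 ∨ b = -1 := by
        have heb : b * e = 1 := by linear_combination -hk0
        exact Int.isUnit_iff.mp (IsUnit.of_mul_eq_one (a := b) e heb)
      refine orbitSet_eq_iff.mpr ⟨b, a, hb, by rw [hab]; ring⟩
  · -- (ii) small denominator case
    intro q hq y
    constructor
    · intro h; exact Gx1_eq_of_orbit (orbitSet_eq_iff.mp h)
    · intro h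
      have hd : 0 < q.den := q.pos
      have hcast : (q : ℝ) = ((q.num : ℝ)) / (q.den : ℝ) := by
        rw [Rat.cast_def]
      have hcop : IsCoprime q.num (q.den : ℤ) := by
        rw [Int.isCoprime_iff_gcd_eq_one]
        simpa [Int.gcd] using q.reduced
      have hq1 : Gx1 (q : ℝ) = Gx1 ((q.den : ℝ))⁻¹ := by
        rw [hcast]; exact Gx1_div hd hcop
      have hy : Gx1 y = Gx1 ((q.den : ℝ))⁻¹ := h.symm.trans hq1
      obtain ⟨m, hm, rfl⟩ := (Gx1_inv_iff hd).mp hy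
      refine orbitSet_eq_iff.mpr ?_
      rw [hcast]
      exact (so_div_iff hd).mpr (small_units hd hq m q.num hm hcop)
  · -- (iii) large denominator case
    intro d hd
    have hd0 : 0 < d := by omega
    have hdz : (0 : ℤ) < d := by exact_mod_cast hd0
    constructor
    · -- cardinality
      classical
      set A := Finset.filter (fun p => 0 < p ∧ 2 * p < d ∧ Nat.Coprime p d)
        (Finset.range d) with hA
      have himg : {O : Set ℝ |
          ∃ y : ℝ, Gx1 y = Gx1 ((d : ℝ))⁻¹ ∧ O = {z | SameOrbit1 y z}}
          = (fun p : ℕ => {z | SameOrbit1 ((p : ℝ) / d) z}) '' ↑A := by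
        ext O
        simp only [Set.mem_setOf_eq, Set.mem_image, Finset.mem_coe]
        constructor
        · rintro ⟨y, hGy, rfl⟩
          obtain ⟨m, hm, rfl⟩ := (Gx1_inv_iff hd0).mp hGy
          have hr0 : 0 ≤ m % d := Int.emod_nonneg m hdz.ne'
          have hrd : m % d < d := Int.emod_lt_of_pos m hdz
          have hmr : m ≡ m % d [ZMOD (d : ℤ)] := by
            show m % d = (m % d) % d
            rw [Int.emod_emod_of_dvd _ dvd_rfl]
          have hcopr : IsCoprime (m % d) (d : ℤ) := by
            obtain ⟨u, v, huv⟩ := hm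
            have h2 := Int.mul_ediv_add_emod m d
            exact ⟨u, v + u * (m / d), by linear_combination huv + u * h2⟩
          have hrne : m % d ≠ 0 := by
            intro h0
            rw [h0] at hcopr
            have := Int.isUnit_iff.mp (isCoprime_zero_left.mp hcopr)
            omega
          have hr2 : 2 * (m % d) ≠ d := by
            intro h2
            have hdvd : (m % d) ∣ (d : ℤ) := ⟨2, by omega⟩
            have := Int.isUnit_iff.mp (hcopr.isUnit_of_dvd hdvd)
            omega
          set r : ℕ := (m % d).toNat with hr
          have hrc : ((r : ℤ)) = m % d := Int.toNat_of_nonneg hr0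
          have hrd' : r < d := by omega
          have hrpos : 0 < r := by omega
          have hrcop : Nat.Coprime r d := by
            show Nat.gcd r d = 1
            rw [← Int.gcd_natCast_natCast, hrc]
            exact Int.isCoprime_iff_gcd_eq_one.mp hcopr
          have hmr' : m ≡ (r : ℤ) [ZMOD (d : ℤ)] := by rw [hrc]; exact hmr
          rcases lt_or_gt_of_ne (show 2 * r ≠ d by omega) with hlt | hgt
          · refine ⟨r, ?_, ?_⟩
            · simp only [hA, Finset.mem_filter, Finset.mem_range]
              exact ⟨hrd', hrpos, hlt, hrcop⟩
            · have hso : SameOrbit1 (((r : ℤ) : ℝ) / d) ((m : ℝ) / d) :=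
                (so_div_iff hd0).mpr (Or.inl hmr')
              have := orbitSet_eq_iff.mpr hso
              simpa using this
          · refine ⟨d - r, ?_, ?_⟩
            · simp only [hA, Finset.mem_filter, Finset.mem_range]
              exact ⟨by omega, by omega, by omega, coprime_sub_nat hrpos hrd' hrcop⟩
            · have hmod : m ≡ -((d - r : ℕ) : ℤ) [ZMOD (d : ℤ)] :=
                hmr'.trans (Int.modEq_iff_dvd.mpr ⟨-1, by omega⟩)
              have hso : SameOrbit1 ((((d - r : ℕ) : ℤ) : ℝ) / d) ((m : ℝ) / d) :=
                (so_div_iff hd0).mpr (Or.inr hmod)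
              have := orbitSet_eq_iff.mpr hso
              simpa using this
        · rintro ⟨p, hp, rfl⟩
          simp only [hA, Finset.mem_filter, Finset.mem_range] at hp
          have hcop : IsCoprime ((p : ℤ)) (d : ℤ) := by
            rw [Int.isCoprime_iff_gcd_eq_one, Int.gcd_natCast_natCast]
            exact hp.2.2.2
          exact ⟨(p : ℝ) / d, Gx1_div hd0 hcop, rfl⟩
      have hinj : Set.InjOn (fun p : ℕ => {z : ℝ | SameOrbit1 ((p : ℝ) / d) z}) ↑A := by
        intro p hp p' hp' heq
        simp only [hA, Finset.mem_coe, Finset.mem_filter, Finset.mem_range] at hp hp'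
        have hso := orbitSet_eq_iff.mp heq
        rcases (so_div_iff hd0).mp hso with h | h
        · have h' : (p' : ℤ) % d = (p : ℤ) % d := h
          rw [Int.emod_eq_of_lt (by omega) (by exact_mod_cast hp'.1),
            Int.emod_eq_of_lt (by omega) (by exact_mod_cast hp.1)] at h'
          exact_mod_cast h'.symm
        · exfalso
          have hdvd : (d : ℤ) ∣ (-(p : ℤ) - p') := Int.modEq_iff_dvd.mp h
          have hdvd' : (d : ℤ) ∣ ((p : ℤ) + p') := by
            obtain ⟨k, hk⟩ := hdvd
            exact ⟨-k, by linear_combination -hk⟩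
          have hle := Int.le_of_dvd (by omega) hdvd'
          omega
      rw [himg, Set.ncard_image_of_injOn hinj, Set.ncard_coe_finset, half_totient hd]
      have h1A : 1 ∈ A := by
        simp only [hA, Finset.mem_filter, Finset.mem_range]
        exact ⟨by omega, by omega, by omega, Nat.coprime_one_left d⟩
      have : 1 ≤ A.card := Finset.card_pos.mpr ⟨1, h1A⟩
      rw [half_totient hd] at this
      omega
    · -- pairwise orbit criterion
      intro p p' hp hpd hp' hpd' hgcd hgcd'
      have := so_div_iff (p := (p : ℤ)) (p' := (p' : ℤ)) hd0
      simpa using this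
end
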